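/- Let T>0 and R>0. There exist constants C>0 and τ₀>0, depending only on R and T, such that for every integer n≥2 with τ=T/n≤τ₀ and every pair of vectors [s]ₙ,[g]ₙ∈ℝ^{n+1} with max(‖[s]ₙ‖²_{w²₂}, ‖[g]ₙ‖²_{w¹₂}) ≤ R², the interpolants sⁿ and gⁿ satisfy: sⁿ∈W²₂[0,T], gⁿ∈W¹₂[0,T], and max(‖sⁿ‖²_{W²₂[0,T]}, ‖gⁿ‖²_{W¹₂[0,T]}) ≤ max(‖[s]ₙ‖²_{w²₂}, ‖[g]ₙ‖²_{w¹₂}) + C·τ. -/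

import Mathlib

open MeasureTheory Filter Topology

noncomputable def clampQ (x : ℝ) : ℝ := min (max x 0) 1

noncomputable def plinQ (τ : ℝ) (v : ℕ → ℝ) (N : ℕ) (t : ℝ) : ℝ :=
  v 0 + ∑ j ∈ Finset.range N, (v (j+1) - v j) * clampQ ((t - j*τ)/τ)

noncomputable def stepQ (τ : ℝ) (c : ℕ → ℝ) (t : ℝ) : ℝ := c ⌊t/τ⌋₊

lemma continuous_clampQ : Continuous clampQ := by
  unfold clampQ; fun_prop

lemma continuous_plinQ (τ : ℝ) (v : ℕ → ℝ) (N : ℕ) : Continuous (plinQ τ v N) := by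
  unfold plinQ
  apply Continuous.add continuous_const
  apply continuous_finset_sum
  intro j _
  exact Continuous.mul continuous_const (continuous_clampQ.comp (by fun_prop))

lemma plinQ_eq {τ : ℝ} (hτ : 0 < τ) (v : ℕ → ℝ) {N k : ℕ} (hk1 : 1 ≤ k) (hkN : k ≤ N)
    {t : ℝ} (ht1 : ((k:ℝ)-1)*τ ≤ t) (ht2 : t ≤ (k:ℝ)*τ) :
    plinQ τ v N t = v (k-1) + (v k - v (k-1))/τ * (t - ((k:ℝ)-1)*τ) := by
  obtain ⟨m, rfl⟩ : ∃ m, k = m + 1 := ⟨k - 1, (Nat.succ_pred_eq_of_pos hk1).symm⟩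
  have hc : ((m+1:ℕ):ℝ) - 1 = (m:ℝ) := by push_cast; ring
  rw [hc] at ht1 ⊢
  unfold plinQ
  rw [← Finset.sum_range_add_sum_Ico _ hkN]
  have h2 : ∑ j ∈ Finset.Ico (m+1) N, (v (j+1) - v j) * clampQ ((t - j*τ)/τ) = 0 := by
    apply Finset.sum_eq_zero
    intro j hj
    have hj1 : (m+1 : ℕ) ≤ j := (Finset.mem_Ico.mp hj).1
    have : t - j*τ ≤ 0 := by
      have : ((m:ℝ)+1) ≤ (j:ℝ) := by exact_mod_cast hj1
      nlinarith
    have : clampQ ((t - j*τ)/τ) = 0 := by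
      unfold clampQ
      have : (t - j*τ)/τ ≤ 0 := div_nonpos_of_nonpos_of_nonneg this hτ.le
      rw [max_eq_right this]; exact min_eq_left zero_le_one
    rw [this, mul_zero]
  rw [h2, add_zero, Finset.sum_range_succ]
  have h3 : ∀ j ∈ Finset.range m, (v (j+1) - v j) * clampQ ((t - j*τ)/τ) = v (j+1) - v j := by
    intro j hj
    have hj1 : (j : ℕ) < m := Finset.mem_range.mp hj
    have h1 : (1:ℝ) ≤ (t - j*τ)/τ := by
      rw [le_div_iff₀ hτ]
      have : ((j:ℝ)+1) ≤ (m:ℝ) := by exact_mod_cast hj1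
      nlinarith
    have : clampQ ((t - j*τ)/τ) = 1 := by
      unfold clampQ
      rw [max_eq_left (le_trans zero_le_one h1), min_eq_right h1]
    rw [this, mul_one]
  rw [Finset.sum_congr rfl h3, Finset.sum_range_sub]
  have hcl : clampQ ((t - m*τ)/τ) = (t - m*τ)/τ := by
    unfold clampQ
    have h0 : 0 ≤ (t - m*τ)/τ := div_nonneg (by linarith) hτ.le
    have h1 : (t - m*τ)/τ ≤ 1 := by
      rw [div_le_one hτ]
      have : ((m+1:ℕ):ℝ) = (m:ℝ)+1 := by push_cast; ring
      rw [this] at ht2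
      linarith
    rw [max_eq_left h0]; exact min_eq_left h1
  rw [hcl]
  have : (m+1) - 1 = m := rfl
  rw [this]
  field_simp
  ring

lemma stepQ_eq {τ : ℝ} (hτ : 0 < τ) (c : ℕ → ℝ) {k : ℕ} {t : ℝ}
    (h1 : (k:ℝ)*τ ≤ t) (h2 : t < ((k:ℝ)+1)*τ) : stepQ τ c t = c k := by
  unfold stepQ
  congr 1
  have ht0 : 0 ≤ t := le_trans (by positivity) h1
  rw [Nat.floor_eq_iff (by positivity)]
  constructor
  · rw [le_div_iff₀ hτ]; linarith
  · rw [div_lt_iff₀ hτ]; push_cast; linarith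

lemma stepQ_intervalIntegrable_piece {τ : ℝ} (hτ : 0 < τ) (c : ℕ → ℝ) (k : ℕ) :
    IntervalIntegrable (stepQ τ c) volume ((k:ℝ)*τ) (((k:ℝ)+1)*τ) := by
  have hle : (k:ℝ)*τ ≤ ((k:ℝ)+1)*τ := by nlinarith
  rw [intervalIntegrable_iff_integrableOn_Ioc_of_le hle]
  have hIoo : IntegrableOn (stepQ τ c) (Set.Ioo ((k:ℝ)*τ) (((k:ℝ)+1)*τ)) volume := by
    apply IntegrableOn.congr_fun (integrableOn_const measure_Ioo_lt_top.ne)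
      (g := stepQ τ c) (f := fun _ => c k)
    · intro x hx
      exact (stepQ_eq hτ c (le_of_lt hx.1) hx.2).symm
    · exact measurableSet_Ioo
  exact hIoo.congr_set_ae Ioo_ae_eq_Ioc.symm

lemma stepQ_intervalIntegrable {τ : ℝ} (hτ : 0 < τ) (c : ℕ → ℝ) (m : ℕ) :
    IntervalIntegrable (stepQ τ c) volume 0 ((m:ℝ)*τ) := by
  induction m with
  | zero => simp
  | succ m ih =>
      have : ((m:ℝ)+1)*τ = (((m+1:ℕ)):ℝ)*τ := by push_cast; ring
      exact this ▸ ih.trans (this ▸ stepQ_intervalIntegrable_piece hτ c m)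

lemma stepQ_integral {τ : ℝ} (hτ : 0 < τ) (c : ℕ → ℝ) (k : ℕ) {t : ℝ}
    (h1 : (k:ℝ)*τ ≤ t) (h2 : t ≤ ((k:ℝ)+1)*τ) :
    ∫ u in ((k:ℝ)*τ)..t, stepQ τ c u = c k * (t - (k:ℝ)*τ) := by
  rw [intervalIntegral.integral_of_le h1, integral_Ioc_eq_integral_Ioo,
    setIntegral_congr_fun measurableSet_Ioo
      (g := fun _ => c k) (fun x hx => stepQ_eq hτ c (le_of_lt hx.1) (lt_of_lt_of_le hx.2 h2)),
    setIntegral_const, Real.volume_real_Ioo_of_le h1, smul_eq_mul,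
    mul_comm]

lemma monomial_integral (c h : ℝ) (n : ℕ) :
    ∫ u in (0:ℝ)..h, c*u^n = c*h^(n+1)/(n+1) := by
  rw [intervalIntegral.integral_const_mul, integral_pow]
  simp
  ring

lemma poly_sq_integral (A B C h : ℝ) :
    ∫ u in (0:ℝ)..h, (A + B*u + C*u^2)^2
      = A^2*h + A*B*h^2 + (B^2+2*A*C)*h^3/3 + B*C*h^4/2 + C^2*h^5/5 := by
  have hfe : (fun u : ℝ => (A + B*u + C*u^2)^2)
      = fun u => A^2*u^0 + ((2*A*B)*u^1 + ((B^2+2*A*C)*u^2 + ((2*B*C)*u^3 + C^2*u^4))) := by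
    funext u; ring
  rw [hfe]
  have i1 : ∀ (c:ℝ) (n:ℕ), IntervalIntegrable (fun u:ℝ => c*u^n) volume 0 h :=
    fun c n => Continuous.intervalIntegrable (by fun_prop) 0 h
  rw [intervalIntegral.integral_add (i1 _ _) (((i1 _ _).add ((i1 _ _).add ((i1 _ _).add (i1 _ _)))))]
  rw [intervalIntegral.integral_add (i1 _ _) (((i1 _ _).add ((i1 _ _).add (i1 _ _))))]
  rw [intervalIntegral.integral_add (i1 _ _) (((i1 _ _).add (i1 _ _)))]
  rw [intervalIntegral.integral_add (i1 _ _) (i1 _ _)]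
  rw [monomial_integral, monomial_integral, monomial_integral, monomial_integral, monomial_integral]
  norm_num
  ring

lemma affine_integral (p q a t : ℝ) :
    ∫ u in a..t, (p + q*(u-a)) = p*(t-a) + q*(t-a)^2/2 := by
  have hfe : (fun u : ℝ => p + q*(u-a)) = fun u => (fun x => p*x^0 + q*x^1) (u - a) := by
    funext u; ring
  rw [hfe, intervalIntegral.integral_comp_sub_right (fun x => p*x^0+q*x^1) a, sub_self]
  have i1 : ∀ (c:ℝ) (n:ℕ), IntervalIntegrable (fun u:ℝ => c*u^n) volume 0 (t-a) :=
    fun c n => Continuous.intervalIntegrable (by fun_prop) 0 (t-a)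
  rw [intervalIntegral.integral_add (i1 _ _) (i1 _ _), monomial_integral, monomial_integral]
  norm_num

lemma plinQ_integral {τ : ℝ} (hτ : 0 < τ) (v : ℕ → ℝ) {N k : ℕ} (hkN : k+1 ≤ N) {t : ℝ}
    (h1 : (k:ℝ)*τ ≤ t) (h2 : t ≤ ((k:ℝ)+1)*τ) :
    ∫ u in ((k:ℝ)*τ)..t, plinQ τ v N u
      = v k * (t - (k:ℝ)*τ) + ((v (k+1) - v k)/τ) * (t - (k:ℝ)*τ)^2/2 := by
  have heq : Set.EqOn (plinQ τ v N)
      (fun u => v k + ((v (k+1) - v k)/τ)*(u - (k:ℝ)*τ)) (Set.uIcc ((k:ℝ)*τ) t) := by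
    intro u hu
    rw [Set.uIcc_of_le h1] at hu
    have hc : ((k+1:ℕ):ℝ) - 1 = (k:ℝ) := by push_cast; ring
    have := plinQ_eq hτ v (Nat.le_add_left 1 k) hkN (t := u)
      (by rw [hc]; exact hu.1) (by push_cast; linarith [hu.2])
    rw [this, hc]
    norm_num
  rw [intervalIntegral.integral_congr heq, affine_integral]

lemma plinQ_node {τ : ℝ} (hτ : 0 < τ) (v : ℕ → ℝ) {N k : ℕ} (hkN : k ≤ N) (hN : 1 ≤ N) :
    plinQ τ v N ((k:ℝ)*τ) = v k := by
  rcases Nat.eq_zero_or_pos k with rfl | hk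
  · have := plinQ_eq hτ v (le_refl 1) hN (t := 0)
      (by norm_num) (by norm_num; exact hτ.le)
    simpa using this
  · have := plinQ_eq hτ v hk hkN (t := (k:ℝ)*τ) (by nlinarith) (le_refl _)
    rw [this]
    have : ((k:ℝ)*τ - ((k:ℝ)-1)*τ) = τ := by ring
    rw [this]
    field_simp
    ring

lemma stepQ_node_integral {τ : ℝ} (hτ : 0 < τ) (v : ℕ → ℝ) (k : ℕ) :
    ∫ u in (0:ℝ)..((k:ℝ)*τ), stepQ τ (fun j => (v (j+1) - v j)/τ) u = v k - v 0 := by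
  induction k with
  | zero => simp
  | succ k ih =>
      have hadd := intervalIntegral.integral_add_adjacent_intervals
        (stepQ_intervalIntegrable hτ (fun j => (v (j+1) - v j)/τ) k)
        (stepQ_intervalIntegrable_piece hτ (fun j => (v (j+1) - v j)/τ) k)
      have hpiece := stepQ_integral hτ (fun j => (v (j+1) - v j)/τ) k
        (t := ((k:ℝ)+1)*τ) (by nlinarith) (le_refl _)
      have hc : ((k+1:ℕ):ℝ) = (k:ℝ)+1 := by push_cast; ring
      rw [hc, ← hadd, ih, hpiece]
      field_simp
      ring

lemma plinQ_ftc {τ : ℝ} (hτ : 0 < τ) (v : ℕ → ℝ) {N : ℕ} (hN : 1 ≤ N) {t : ℝ}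
    (h0 : 0 ≤ t) (hT : t ≤ (N:ℝ)*τ) :
    ∫ u in (0:ℝ)..t, stepQ τ (fun j => (v (j+1) - v j)/τ) u = plinQ τ v N t - v 0 := by
  set c : ℕ → ℝ := fun j => (v (j+1) - v j)/τ with hc
  rcases eq_or_lt_of_le hT with rfl | hlt
  · rw [stepQ_node_integral hτ v N, plinQ_node hτ v (le_refl N) hN]
  · set k := ⌊t/τ⌋₊ with hk
    have hk1 : (k:ℝ)*τ ≤ t := by
      rw [show (k:ℝ)*τ ≤ t ↔ (k:ℝ) ≤ t/τ from (le_div_iff₀ hτ).symm]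
      exact Nat.floor_le (by positivity)
    have hk2 : t < ((k:ℝ)+1)*τ := by
      rw [show t < ((k:ℝ)+1)*τ ↔ t/τ < (k:ℝ)+1 from (div_lt_iff₀ hτ).symm]
      exact_mod_cast Nat.lt_floor_add_one (t/τ)
    have hkN : k+1 ≤ N := by
      by_contra hcon
      push_neg at hcon
      have : (N:ℝ) ≤ (k:ℝ) := by exact_mod_cast Nat.lt_succ_iff.mp hcon
      nlinarith
    have hadd := intervalIntegral.integral_add_adjacent_intervals
      (stepQ_intervalIntegrable hτ c k)
      ((stepQ_intervalIntegrable_piece hτ c k).mono_set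
        (by rw [Set.uIcc_of_le hk1, Set.uIcc_of_le (by nlinarith)]
            exact Set.Icc_subset_Icc (le_refl _) hk2.le))
    rw [← hadd, stepQ_node_integral hτ v k, stepQ_integral hτ c k hk1 hk2.le]
    have hpe := plinQ_eq hτ v (Nat.le_add_left 1 k) hkN (t := t)
      (by push_cast; linarith) (by push_cast; linarith)
    rw [hpe]
    have hsimp : (k+1) - 1 = k := rfl
    rw [hsimp]
    push_cast
    ring

lemma plinQ_ftc' {τ : ℝ} (hτ : 0 < τ) (v : ℕ → ℝ) {N : ℕ} (hN : 1 ≤ N) {a b : ℝ}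
    (h0 : 0 ≤ a) (hab : a ≤ b) (hT : b ≤ (N:ℝ)*τ) :
    plinQ τ v N b - plinQ τ v N a
      = ∫ u in a..b, stepQ τ (fun j => (v (j+1) - v j)/τ) u := by
  set c : ℕ → ℝ := fun j => (v (j+1) - v j)/τ with hc
  have hib : IntervalIntegrable (stepQ τ c) volume 0 a :=
    (stepQ_intervalIntegrable hτ c N).mono_set
      (by rw [Set.uIcc_of_le h0, Set.uIcc_of_le (by positivity)]
          exact Set.Icc_subset_Icc (le_refl _) (by linarith))
  have hab' : IntervalIntegrable (stepQ τ c) volume a b :=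
    (stepQ_intervalIntegrable hτ c N).mono_set
      (by rw [Set.uIcc_of_le hab, Set.uIcc_of_le (by positivity)]
          exact Set.Icc_subset_Icc h0 hT)
  have hadd := intervalIntegral.integral_add_adjacent_intervals hib hab'
  have e1 := plinQ_ftc hτ v hN h0 (le_trans hab hT)
  have e2 := plinQ_ftc hτ v hN (le_trans h0 hab) hT
  rw [← hadd, e1] at e2
  linarith

lemma stepQ_sq (τ : ℝ) (c : ℕ → ℝ) :
    (fun t => (stepQ τ c t)^2) = stepQ τ (fun k => (c k)^2) := rfl

lemma plinQ_node_step {τ : ℝ} (hτ : 0 < τ) (v : ℕ → ℝ) {N k : ℕ} (h : k+1 ≤ N) :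
    ∫ u in (0:ℝ)..(((k:ℝ)+1)*τ), plinQ τ v N u
      = (∫ u in (0:ℝ)..((k:ℝ)*τ), plinQ τ v N u) + (v k + v (k+1))*τ/2 := by
  have hadd := intervalIntegral.integral_add_adjacent_intervals
    ((continuous_plinQ τ v N).intervalIntegrable (μ := volume) 0 ((k:ℝ)*τ))
    ((continuous_plinQ τ v N).intervalIntegrable (μ := volume) ((k:ℝ)*τ) (((k:ℝ)+1)*τ))
  rw [← hadd, plinQ_integral hτ v h (by nlinarith) (le_refl _)]
  field_simp
  ring

lemma sq_shift_integral (A B C a h : ℝ) (f : ℝ → ℝ) (hh : 0 ≤ h)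
    (heq : ∀ u ∈ Set.Icc a (a+h), f u = A + B*(u-a) + C*(u-a)^2) :
    ∫ u in a..(a+h), (f u)^2
      = A^2*h + A*B*h^2 + (B^2+2*A*C)*h^3/3 + B*C*h^4/2 + C^2*h^5/5 := by
  have heq2 : Set.EqOn (fun u => (f u)^2)
      (fun u => (fun x => (A + B*x + C*x^2)^2) (u - a)) (Set.uIcc a (a+h)) := by
    intro u hu
    rw [Set.uIcc_of_le (by linarith)] at hu
    simp only []
    rw [heq u hu]
  rw [intervalIntegral.integral_congr heq2,
    intervalIntegral.integral_comp_sub_right (fun x => (A + B*x + C*x^2)^2) a,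
    sub_self, add_sub_cancel_left, poly_sq_integral]

lemma icc_sum (n : ℕ) (f : ℕ → ℝ) : (∑ i ∈ Finset.Icc 1 n, f i) = ∑ i ∈ Finset.range n, f (i+1) := by
  have : Finset.Icc 1 n = Finset.Ico 1 (n+1) := by ext x; simp [Nat.lt_succ_iff]
  rw [this, Finset.sum_Ico_eq_sum_range]
  simp [add_comm]

lemma piece_bound_s (M W c t : ℝ) (h0 : 0 < t) (h1 : t ≤ 1) :
    t*(M^2 + W^2 + c^2) + t^2*(M*W + W*c) + t^3*(W^2/3 + M*c/3 + c^2/3)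
      + t^4*(W*c/4) + t^5*(c^2/20)
    ≤ (1+3*t)*(t*M^2 + t*W^2 + t*c^2) := by
  have hP : (0:ℝ) ≤ M^2+W^2+c^2 := by positivity
  have h2 : (0:ℝ) ≤ t^2 := sq_nonneg t
  have h3 : (0:ℝ) ≤ t^3 := by positivity
  have h4 : (0:ℝ) ≤ t^4 := by positivity
  have h5 : (0:ℝ) ≤ t^5 := by positivity
  have ht3 : t^3 ≤ t^2 := by nlinarith
  have ht4 : t^4 ≤ t^2 := by nlinarith
  have ht5 : t^5 ≤ t^2 := by nlinarith
  have hb1 : M*W + W*c ≤ M^2+W^2+c^2 := by nlinarith [sq_nonneg (M-W), sq_nonneg (W-c)]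
  have hb2 : W^2/3 + M*c/3 + c^2/3 ≤ (M^2+W^2+c^2)/2 := by nlinarith [sq_nonneg (M-c)]
  have hb3 : W*c/4 ≤ (M^2+W^2+c^2)/8 := by nlinarith [sq_nonneg (W-c)]
  have hb4 : c^2/20 ≤ (M^2+W^2+c^2)/20 := by nlinarith
  have k1 : t^2*(M*W+W*c) ≤ t^2*(M^2+W^2+c^2) := mul_le_mul_of_nonneg_left hb1 h2
  have k2a : t^3*(W^2/3+M*c/3+c^2/3) ≤ t^3*((M^2+W^2+c^2)/2) := mul_le_mul_of_nonneg_left hb2 h3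
  have k2b : t^3*((M^2+W^2+c^2)/2) ≤ t^2*((M^2+W^2+c^2)/2) :=
    mul_le_mul_of_nonneg_right ht3 (by positivity)
  have k3a : t^4*(W*c/4) ≤ t^4*((M^2+W^2+c^2)/8) := mul_le_mul_of_nonneg_left hb3 h4
  have k3b : t^4*((M^2+W^2+c^2)/8) ≤ t^2*((M^2+W^2+c^2)/8) :=
    mul_le_mul_of_nonneg_right ht4 (by positivity)
  have k4a : t^5*(c^2/20) ≤ t^5*((M^2+W^2+c^2)/20) := mul_le_mul_of_nonneg_left hb4 h5
  have k4b : t^5*((M^2+W^2+c^2)/20) ≤ t^2*((M^2+W^2+c^2)/20) :=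
    mul_le_mul_of_nonneg_right ht5 (by positivity)
  nlinarith [k1, k2a, k2b, k3a, k3b, k4a, k4b, mul_nonneg h2 hP]

lemma piece_bound_g (A B t : ℝ) (h0 : 0 < t) (h1 : t ≤ 1) :
    t*(A^2 + B^2) + t^2*(A*B) + t^3*(B^2/3) ≤ (1+3*t)*(t*A^2 + t*B^2) := by
  have h2 : (0:ℝ) ≤ t^2 := sq_nonneg t
  have h3 : (0:ℝ) ≤ t^3 := by positivity
  have ht3 : t^3 ≤ t^2 := by nlinarith
  have k1 : t^2*(A*B) ≤ t^2*((A^2+B^2)/2) :=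
    mul_le_mul_of_nonneg_left (by nlinarith [sq_nonneg (A-B)]) h2
  have k2a : t^3*(B^2/3) ≤ t^3*((A^2+B^2)/2) :=
    mul_le_mul_of_nonneg_left (by nlinarith [sq_nonneg A]) h3
  have k2b : t^3*((A^2+B^2)/2) ≤ t^2*((A^2+B^2)/2) :=
    mul_le_mul_of_nonneg_right ht3 (by positivity)
  nlinarith [k1, k2a, k2b, mul_nonneg h2 (by positivity : (0:ℝ) ≤ A^2+B^2)]

lemma final_bound_s (D K R t : ℝ) (hτ : 0 < t) (hτ1 : t ≤ 1) (hD0 : 0 ≤ D) (hDR : D ≤ R^2)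
    (hK0 : 0 ≤ K) : (1+3*t)*(D + t*K/2) ≤ D + (3*R^2 + 2*K + 1)*t := by
  nlinarith [mul_nonneg hτ.le hK0, mul_nonneg (mul_nonneg hτ.le hτ.le) hK0,
    mul_le_mul_of_nonneg_left hDR (by linarith : (0:ℝ) ≤ 3*t)]

lemma final_bound_g (D K R t : ℝ) (hτ : 0 < t) (hK0 : 0 ≤ K) (hDR : D ≤ R^2) :
    (1+3*t)*D ≤ D + (3*R^2 + 2*K + 1)*t := by
  nlinarith [mul_le_mul_of_nonneg_left hDR (by linarith : (0:ℝ) ≤ 3*t), mul_nonneg hτ.le hK0]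


set_option maxHeartbeats 1000000 in
/-- Lemma 2.3, inequality (2.20): the interpolants `sⁿ, gⁿ` of discrete control
vectors with discrete norms bounded by `R²` belong to `W²₂[0,T] × W¹₂[0,T]`, and for
sufficiently small `τ = T/n` their continuous norms exceed the discrete ones by at most `Cτ`. -/
theorem stmt_7 (T R : ℝ) (hT : 0 < T) (hR : 0 < R) :
    ∃ C > (0:ℝ), ∃ τ₀ > (0:ℝ), ∀ n : ℕ, 2 ≤ n → ∀ τ : ℝ, τ = T / n → τ ≤ τ₀ →
      ∀ sv gv : ℕ → ℝ,
      max
        (∑ k ∈ Finset.range n, τ * (sv k)^2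
          + ∑ k ∈ Finset.Icc 1 n, τ * ((sv k - sv (k-1))/τ)^2
          + (τ * ((sv 1 - sv 0)/τ^2)^2
              + ∑ k ∈ Finset.Icc 1 (n-1), τ * ((sv (k+1) - 2*sv k + sv (k-1))/τ^2)^2))
        (∑ k ∈ Finset.range n, τ * (gv k)^2
          + ∑ k ∈ Finset.Icc 1 n, τ * ((gv k - gv (k-1))/τ)^2) ≤ R^2 →
      ∃ sn sn' sn'' gn gn' : ℝ → ℝ,
        -- sⁿ is the quadratic interpolant of [s]ₙ
        (∀ t ∈ Set.Icc (0:ℝ) τ, sn t = sv 0 + t^2/(2*τ) * ((sv 1 - sv 0)/τ)) ∧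
        (∀ k ∈ Finset.Icc 2 n, ∀ t ∈ Set.Icc (((k:ℝ)-1)*τ) ((k:ℝ)*τ),
          sn t = sv (k-1) + (t - ((k:ℝ)-1)*τ - τ/2) * ((sv (k-1) - sv (k-2))/τ)
               + (1/2)*(t - ((k:ℝ)-1)*τ)^2 * ((sv k - 2*sv (k-1) + sv (k-2))/τ^2)) ∧
        -- gⁿ is the piecewise linear interpolant of [g]ₙ
        (∀ k ∈ Finset.Icc 1 n, ∀ t ∈ Set.Icc (((k:ℝ)-1)*τ) ((k:ℝ)*τ),
          gn t = gv (k-1) + (gv k - gv (k-1))/τ * (t - ((k:ℝ)-1)*τ)) ∧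
        -- sⁿ ∈ W²₂[0,T]
        (∀ t ∈ Set.Icc (0:ℝ) T, HasDerivAt sn (sn' t) t) ∧
        IntervalIntegrable sn'' volume 0 T ∧
        IntervalIntegrable (fun t => (sn'' t)^2) volume 0 T ∧
        (∀ a b : ℝ, 0 ≤ a → a ≤ b → b ≤ T → sn' b - sn' a = ∫ t in a..b, sn'' t) ∧
        -- gⁿ ∈ W¹₂[0,T]
        IntervalIntegrable gn' volume 0 T ∧
        IntervalIntegrable (fun t => (gn' t)^2) volume 0 T ∧
        (∀ a b : ℝ, 0 ≤ a → a ≤ b → b ≤ T → gn b - gn a = ∫ t in a..b, gn' t) ∧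
        -- the norm estimate (2.20)
        max (∫ t in (0:ℝ)..T, ((sn t)^2 + (sn' t)^2 + (sn'' t)^2))
            (∫ t in (0:ℝ)..T, ((gn t)^2 + (gn' t)^2))
          ≤ max
              (∑ k ∈ Finset.range n, τ * (sv k)^2
                + ∑ k ∈ Finset.Icc 1 n, τ * ((sv k - sv (k-1))/τ)^2
                + (τ * ((sv 1 - sv 0)/τ^2)^2
                    + ∑ k ∈ Finset.Icc 1 (n-1), τ * ((sv (k+1) - 2*sv k + sv (k-1))/τ^2)^2))
              (∑ k ∈ Finset.range n, τ * (gv k)^2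
                + ∑ k ∈ Finset.Icc 1 n, τ * ((gv k - gv (k-1))/τ)^2)
            + C * τ := by
  set K : ℝ := (2*R^2 + 2*T^2*R^2)/T with hK
  have hK0 : 0 ≤ K := by positivity
  refine ⟨3*R^2 + 2*K + 1, by positivity, 1, one_pos, ?_⟩
  intro n hn τ hτeq hτ1 sv gv hbound
  have hn0 : (0:ℝ) < (n:ℝ) := by exact_mod_cast (by omega : 0 < n)
  have hτ : 0 < τ := by rw [hτeq]; positivity
  have hTn : (n:ℝ)*τ = T := by rw [hτeq]; field_simp
  set w : ℕ → ℝ := fun k => if k = 0 then 0 else (sv k - sv (k-1))/τ with hw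
  set cS : ℕ → ℝ := fun j => (w (j+1) - w j)/τ with hcS
  set cG : ℕ → ℝ := fun j => (gv (j+1) - gv j)/τ with hcG
  set Mk : ℕ → ℝ := fun k => if k = 0 then sv 0 else (sv (k-1) + sv k)/2 with hMk
  -- node values of the integral of the spline derivative
  have hnode : ∀ k, k ≤ n → sv 0 + (∫ u in (0:ℝ)..((k:ℝ)*τ), plinQ τ w n u) = Mk k := by
    intro k
    induction k with
    | zero => intro _; simp [hMk]
    | succ k ih =>
        intro hkn
        have hstep := plinQ_node_step hτ w (N := n) (k := k) hkn
        have hcast : ((k+1:ℕ):ℝ) = (k:ℝ)+1 := by push_cast; ring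
        rw [hcast, hstep, ← add_assoc, ih (by omega)]
        rcases Nat.eq_zero_or_pos k with rfl | hk
        · simp only [hMk, hw]
          norm_num
          field_simp
          ring
        · have hk0 : k ≠ 0 := by omega
          have hk10 : k + 1 ≠ 0 := by omega
          simp only [hMk, hw, if_neg hk0, if_neg hk10, Nat.add_sub_cancel]
          field_simp
          ring
  -- piece formula for sn
  have hsnpiece : ∀ k, k < n → ∀ t ∈ Set.Icc ((k:ℝ)*τ) (((k:ℝ)+1)*τ),
      (sv 0 + ∫ u in (0:ℝ)..t, plinQ τ w n u)
        = Mk k + w k * (t - (k:ℝ)*τ) + (cS k/2) * (t - (k:ℝ)*τ)^2 := by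
    intro k hkn t ht
    have hadd := intervalIntegral.integral_add_adjacent_intervals
      ((continuous_plinQ τ w n).intervalIntegrable (μ := volume) 0 ((k:ℝ)*τ))
      ((continuous_plinQ τ w n).intervalIntegrable (μ := volume) ((k:ℝ)*τ) t)
    rw [← hadd, ← add_assoc, hnode k (by omega),
      plinQ_integral hτ w (by omega : k+1 ≤ n) ht.1 ht.2]
    simp only [hcS]
    field_simp
    ring
  refine ⟨fun t => sv 0 + ∫ u in (0:ℝ)..t, plinQ τ w n u, plinQ τ w n,
    stepQ τ cS, plinQ τ gv n, stepQ τ cG, ?_, ?_, ?_, ?_, ?_, ?_, ?_, ?_, ?_, ?_, ?_⟩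
  · -- sn on [0,τ]
    intro t ht
    have := hsnpiece 0 (by omega) t (by simpa using ht)
    simp only [Nat.cast_zero, zero_mul, sub_zero] at this
    beta_reduce
    rw [this]
    simp only [hMk, hcS, hw]
    norm_num
    field_simp
  · -- sn pieces
    intro k hk t ht
    have hk2 : 2 ≤ k ∧ k ≤ n := by simpa using hk
    obtain ⟨m, rfl⟩ : ∃ m, k = m+2 := ⟨k-2, by omega⟩
    have hcast : ((m+2:ℕ):ℝ) - 1 = ((m+1:ℕ):ℝ) := by push_cast; ring
    rw [hcast] at ht ⊢
    have := hsnpiece (m+1) (by omega) t (by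
      constructor
      · exact ht.1
      · have : (((m+1:ℕ)):ℝ)+1 = ((m+2:ℕ):ℝ) := by push_cast; ring
        rw [this]; exact ht.2)
    beta_reduce
    rw [this]
    have h1 : (m+2) - 1 = m+1 := rfl
    have h2 : (m+2) - 2 = m := rfl
    rw [h1, h2]
    simp only [hMk, hcS, hw, if_neg (by omega : ¬ m+1 = 0), if_neg (by omega : ¬ m+2 = 0),
      Nat.add_sub_cancel]
    rw [show m+1+1 = m+2 from rfl]
    field_simp
    ring
  · -- gn pieces
    intro k hk t ht
    have hk1 : 1 ≤ k ∧ k ≤ n := by simpa using hk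
    exact plinQ_eq hτ gv hk1.1 hk1.2 ht.1 ht.2
  · -- HasDerivAt
    intro t _
    exact (intervalIntegral.integral_hasDerivAt_right
      ((continuous_plinQ τ w n).intervalIntegrable (μ := volume) 0 t)
      ((continuous_plinQ τ w n).stronglyMeasurableAtFilter _ _)
      (continuous_plinQ τ w n).continuousAt).const_add (sv 0)
  · rw [← hTn]; exact stepQ_intervalIntegrable hτ cS n
  · rw [← hTn, stepQ_sq]; exact stepQ_intervalIntegrable hτ _ n
  · intro a b h0 hab hbT
    exact plinQ_ftc' hτ w (by omega) h0 hab (by rw [hTn]; exact hbT)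
  · rw [← hTn]; exact stepQ_intervalIntegrable hτ cG n
  · rw [← hTn, stepQ_sq]; exact stepQ_intervalIntegrable hτ _ n
  · intro a b h0 hab hbT
    exact plinQ_ftc' hτ gv (by omega) h0 hab (by rw [hTn]; exact hbT)
  · -- the estimate
    have hsnd : ∀ t : ℝ, HasDerivAt (fun t => sv 0 + ∫ u in (0:ℝ)..t, plinQ τ w n u)
        (plinQ τ w n t) t := by
      intro t
      exact (intervalIntegral.integral_hasDerivAt_right
        ((continuous_plinQ τ w n).intervalIntegrable (μ := volume) 0 t)
        ((continuous_plinQ τ w n).stronglyMeasurableAtFilter _ _)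
        (continuous_plinQ τ w n).continuousAt).const_add (sv 0)
    have hsncont : Continuous (fun t => sv 0 + ∫ u in (0:ℝ)..t, plinQ τ w n u) :=
      continuous_iff_continuousAt.2 fun t => (hsnd t).continuousAt
    -- discrete sum rewrites
    have hDS : ∑ k ∈ Finset.range n, τ * (sv k)^2
          + ∑ k ∈ Finset.Icc 1 n, τ * ((sv k - sv (k-1))/τ)^2
          + (τ * ((sv 1 - sv 0)/τ^2)^2
              + ∑ k ∈ Finset.Icc 1 (n-1), τ * ((sv (k+1) - 2*sv k + sv (k-1))/τ^2)^2)
        = (∑ k ∈ Finset.range n, τ * (sv k)^2) + (∑ k ∈ Finset.range n, τ * (w (k+1))^2)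
          + ∑ k ∈ Finset.range n, τ * (cS k)^2 := by
      congr 1
      · congr 1
        rw [icc_sum]
        exact Finset.sum_congr rfl fun k _ => by
          simp only [hw, Nat.add_sub_cancel, if_neg (by omega : ¬ k+1 = 0)]
      · rw [icc_sum]
        have hsplit : ∑ k ∈ Finset.range n, τ * (cS k)^2
            = ∑ k ∈ Finset.range (n-1), τ * (cS (k+1))^2 + τ * (cS 0)^2 := by
          conv_lhs => rw [show n = (n-1)+1 from by omega]
          exact Finset.sum_range_succ' _ _
        rw [hsplit]
        rw [add_comm (∑ k ∈ Finset.range (n-1), τ * (cS (k+1))^2) (τ * (cS 0)^2)]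
        congr 1
        · have h0 : cS 0 = (sv 1 - sv 0)/τ^2 := by
            simp only [hcS, hw, if_neg (by omega : ¬ (1:ℕ) = 0), if_pos rfl]
            norm_num
            rw [div_div, ← pow_two]
          rw [h0]
        · exact Finset.sum_congr rfl fun k _ => by
            have h1 : cS (k+1) = (sv (k+2) - 2*sv (k+1) + sv k)/τ^2 := by
              simp only [hcS, hw, if_neg (by omega : ¬ k+1 = 0), if_neg (by omega : ¬ k+2 = 0),
                Nat.add_sub_cancel, show k+1+1 = k+2 from rfl]
              rw [div_sub_div_same, div_div, ← pow_two]
              congr 1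
              ring
            rw [Nat.add_sub_cancel, show k+1+1 = k+2 from rfl, h1]
    have hDG : ∑ k ∈ Finset.range n, τ * (gv k)^2
          + ∑ k ∈ Finset.Icc 1 n, τ * ((gv k - gv (k-1))/τ)^2
        = (∑ k ∈ Finset.range n, τ * (gv k)^2) + ∑ k ∈ Finset.range n, τ * (cG k)^2 := by
      congr 1
      rw [icc_sum]
      exact Finset.sum_congr rfl fun k _ => by
        simp only [hcG, Nat.add_sub_cancel]
    -- nonnegativity
    have hnn : ∀ f : ℕ → ℝ, (0:ℝ) ≤ ∑ k ∈ Finset.range n, τ * (f k)^2 :=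
      fun f => Finset.sum_nonneg fun k _ => by positivity
    have hRs : (∑ k ∈ Finset.range n, τ * (sv k)^2) + (∑ k ∈ Finset.range n, τ * (w (k+1))^2)
          + (∑ k ∈ Finset.range n, τ * (cS k)^2) ≤ R^2 := by
      rw [← hDS]; exact le_trans (le_max_left _ _) hbound
    have hRg : (∑ k ∈ Finset.range n, τ * (gv k)^2) + (∑ k ∈ Finset.range n, τ * (cG k)^2)
          ≤ R^2 := by
      rw [← hDG]; exact le_trans (le_max_right _ _) hbound
    have hSA : (∑ k ∈ Finset.range n, τ * (sv k)^2) ≤ R^2 := by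
      nlinarith [hnn (fun k => w (k+1)), hnn cS]
    have hSW2 : (∑ k ∈ Finset.range n, τ * (w (k+1))^2) ≤ R^2 := by
      nlinarith [hnn sv, hnn cS]
    -- bound on (sv 0)^2
    have ha0 : (sv 0)^2 ≤ K := by
      have hkb : ∀ k ∈ Finset.range n, (sv k - sv 0)^2 ≤ T*R^2 := by
        intro k hk
        have hkn : k < n := Finset.mem_range.mp hk
        have htele : sv k - sv 0 = ∑ i ∈ Finset.range k, (sv (i+1) - sv i) :=
          (Finset.sum_range_sub sv k).symm
        have hcs : (∑ i ∈ Finset.range k, (sv (i+1) - sv i))^2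
            ≤ (Finset.range k).card * ∑ i ∈ Finset.range k, (sv (i+1) - sv i)^2 :=
          sq_sum_le_card_mul_sum_sq
        rw [Finset.card_range] at hcs
        have hterm : ∀ i ∈ Finset.range k, (sv (i+1) - sv i)^2 = τ * (τ * (w (i+1))^2) := by
          intro i _
          simp only [hw, if_neg (by omega : ¬ i+1 = 0), Nat.add_sub_cancel]
          field_simp
        rw [Finset.sum_congr rfl hterm, ← Finset.mul_sum] at hcs
        have hsub : ∑ i ∈ Finset.range k, τ * (w (i+1))^2
            ≤ ∑ i ∈ Finset.range n, τ * (w (i+1))^2 :=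
          Finset.sum_le_sum_of_subset_of_nonneg (Finset.range_subset_range.2 hkn.le)
            (fun i _ _ => by positivity)
        have hsnn : (0:ℝ) ≤ ∑ i ∈ Finset.range k, τ * (w (i+1))^2 :=
          Finset.sum_nonneg fun i _ => by positivity
        have hkτ : (k:ℝ)*τ ≤ T := by
          rw [← hTn]
          have : (k:ℝ) ≤ (n:ℝ) := by exact_mod_cast hkn.le
          nlinarith
        have hkτ0 : (0:ℝ) ≤ (k:ℝ)*τ := by positivity
        calc (sv k - sv 0)^2 ≤ (k:ℝ) * (τ * ∑ i ∈ Finset.range k, τ * (w (i+1))^2) := by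
              rw [htele]; exact hcs
          _ = ((k:ℝ)*τ) * ∑ i ∈ Finset.range k, τ * (w (i+1))^2 := by ring
          _ ≤ T * R^2 := by
              apply mul_le_mul hkτ (le_trans hsub hSW2) hsnn hT.le
      have hpt : ∀ k ∈ Finset.range n, τ*(sv 0)^2 ≤ 2*(τ*(sv k)^2) + τ*(2*(T*R^2)) := by
        intro k hk
        have h1 : (sv 0)^2 ≤ 2*(sv k)^2 + 2*(sv k - sv 0)^2 := by
          nlinarith [sq_nonneg (2*sv k - sv 0)]
        have h2 := hkb k hk
        nlinarith [hτ.le, mul_le_mul_of_nonneg_left (by linarith : (sv 0)^2 ≤ 2*(sv k)^2 + 2*(T*R^2)) hτ.le]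
      have hsum := Finset.sum_le_sum hpt
      rw [Finset.sum_const, Finset.card_range] at hsum
      simp only [nsmul_eq_mul] at hsum
      have hds : ∑ k ∈ Finset.range n, (2*(τ*(sv k)^2) + τ*(2*(T*R^2)))
          = 2*(∑ k ∈ Finset.range n, τ*(sv k)^2) + ((n:ℝ)*τ)*(2*(T*R^2)) := by
        rw [Finset.sum_add_distrib, ← Finset.mul_sum, Finset.sum_const, Finset.card_range]
        simp only [nsmul_eq_mul]
        ring
      rw [hds, hTn] at hsum
      have hKT : K*T = 2*R^2 + 2*T^2*R^2 := by rw [hK]; field_simp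
      have hTn' : (n:ℝ)*(τ*(sv 0)^2) = T*(sv 0)^2 := by rw [← hTn]; ring
      rw [hTn'] at hsum
      nlinarith [hSA, hT]
    -- SM bound
    have hSM : (∑ k ∈ Finset.range n, τ * (Mk k)^2)
        ≤ (∑ k ∈ Finset.range n, τ * (sv k)^2) + τ*K/2 := by
      have hsplitM : ∑ k ∈ Finset.range n, τ*(Mk k)^2
          = ∑ k ∈ Finset.range (n-1), τ*(Mk (k+1))^2 + τ*(Mk 0)^2 := by
        conv_lhs => rw [show n = (n-1)+1 from by omega]
        exact Finset.sum_range_succ' _ _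
      have hsplitA : ∑ k ∈ Finset.range n, τ*(sv k)^2
          = ∑ k ∈ Finset.range (n-1), τ*(sv (k+1))^2 + τ*(sv 0)^2 := by
        conv_lhs => rw [show n = (n-1)+1 from by omega]
        exact Finset.sum_range_succ' _ _
      have hM0 : τ*(Mk 0)^2 = τ*(sv 0)^2 := by simp [hMk]
      have hsum1 : ∑ k ∈ Finset.range (n-1), τ*(Mk (k+1))^2
          ≤ ∑ k ∈ Finset.range (n-1), (τ*(sv k)^2 + τ*(sv (k+1))^2)/2 := by
        apply Finset.sum_le_sum
        intro k _
        have hMk1 : Mk (k+1) = (sv k + sv (k+1))/2 := by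
          simp only [hMk, if_neg (by omega : ¬ k+1 = 0), Nat.add_sub_cancel]
        rw [hMk1]
        nlinarith [mul_nonneg hτ.le (sq_nonneg (sv k - sv (k+1)))]
      have hsum2 : ∑ k ∈ Finset.range (n-1), (τ*(sv k)^2 + τ*(sv (k+1))^2)/2
          = (∑ k ∈ Finset.range (n-1), τ*(sv k)^2)/2
            + (∑ k ∈ Finset.range (n-1), τ*(sv (k+1))^2)/2 := by
        rw [← Finset.sum_div, Finset.sum_add_distrib]
        ring
      have hA1 : ∑ k ∈ Finset.range (n-1), τ*(sv k)^2 ≤ ∑ k ∈ Finset.range n, τ*(sv k)^2 :=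
        Finset.sum_le_sum_of_subset_of_nonneg (Finset.range_subset_range.2 (by omega))
          (fun i _ _ => by positivity)
      have hKτ : τ*(sv 0)^2 ≤ τ*K := mul_le_mul_of_nonneg_left ha0 hτ.le
      linarith
    -- SW1 bound
    have hSW1 : (∑ k ∈ Finset.range n, τ * (w k)^2)
        ≤ ∑ k ∈ Finset.range n, τ * (w (k+1))^2 := by
      have h1 : ∑ k ∈ Finset.range n, τ*(w k)^2
          = ∑ k ∈ Finset.range (n-1), τ*(w (k+1))^2 + τ*(w 0)^2 := by
        conv_lhs => rw [show n = (n-1)+1 from by omega]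
        exact Finset.sum_range_succ' _ _
      have hw0 : w 0 = (0:ℝ) := by simp [hw]
      rw [h1, hw0]
      norm_num
      exact Finset.sum_le_sum_of_subset_of_nonneg (Finset.range_subset_range.2 (by omega))
        (fun i _ _ => by positivity)
    -- continuous integral, s side
    have hIs : (∫ t in (0:ℝ)..T, (((fun t => sv 0 + ∫ u in (0:ℝ)..t, plinQ τ w n u) t)^2
          + (plinQ τ w n t)^2 + (stepQ τ cS t)^2))
        = ∑ k ∈ Finset.range n,
            (τ*((Mk k)^2 + (w k)^2 + (cS k)^2)
              + τ^2*((Mk k)*(w k) + (w k)*(cS k))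
              + τ^3*((w k)^2/3 + (Mk k)*(cS k)/3 + (cS k)^2/3)
              + τ^4*((w k)*(cS k)/4)
              + τ^5*((cS k)^2/20)) := by
      rw [← hTn]
      have hint1 : ∀ a b : ℝ, IntervalIntegrable
          (fun t => ((fun t => sv 0 + ∫ u in (0:ℝ)..t, plinQ τ w n u) t)^2) volume a b :=
        fun a b => Continuous.intervalIntegrable (hsncont.pow 2) a b
      have hint2 : ∀ a b : ℝ, IntervalIntegrable (fun t => (plinQ τ w n t)^2) volume a b :=
        fun a b => Continuous.intervalIntegrable ((continuous_plinQ τ w n).pow 2) a b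
      have hint3 : ∀ k : ℕ, IntervalIntegrable (fun t => (stepQ τ cS t)^2) volume
          ((k:ℝ)*τ) (((k:ℝ)+1)*τ) := by
        intro k
        rw [stepQ_sq]
        exact stepQ_intervalIntegrable_piece hτ _ k
      have hsum := intervalIntegral.sum_integral_adjacent_intervals (μ := volume)
        (a := fun k : ℕ => (k:ℝ)*τ) (n := n)
        (f := fun t => ((fun t => sv 0 + ∫ u in (0:ℝ)..t, plinQ τ w n u) t)^2
          + (plinQ τ w n t)^2 + (stepQ τ cS t)^2)
        (fun k hk => by
          beta_reduce
          push_cast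
          exact ((hint1 _ _).add (hint2 _ _)).add (hint3 k))
      simp only [Nat.cast_zero, zero_mul] at hsum
      rw [← hsum]
      apply Finset.sum_congr rfl
      intro k hk
      have hkn : k < n := Finset.mem_range.mp hk
      have hb : ((k:ℝ)+1)*τ = (k:ℝ)*τ + τ := by ring
      beta_reduce
      push_cast
      rw [show ((k:ℝ)+1)*τ = (k:ℝ)*τ + τ from by ring,
        intervalIntegral.integral_add ((hint1 _ _).add (hint2 _ _)) (hb ▸ hint3 k),
        intervalIntegral.integral_add (hint1 _ _) (hint2 _ _)]
      have heq1 : ∀ u ∈ Set.Icc ((k:ℝ)*τ) ((k:ℝ)*τ + τ),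
          (sv 0 + ∫ v in (0:ℝ)..u, plinQ τ w n v)
            = Mk k + (w k)*(u - (k:ℝ)*τ) + (cS k/2)*(u - (k:ℝ)*τ)^2 := by
        intro u hu
        have := hsnpiece k hkn u ⟨hu.1, by linarith [hu.2]⟩
        rw [this]
      have heq2 : ∀ u ∈ Set.Icc ((k:ℝ)*τ) ((k:ℝ)*τ + τ),
          plinQ τ w n u = w k + cS k*(u - (k:ℝ)*τ) + 0*(u - (k:ℝ)*τ)^2 := by
        intro u hu
        have hc2 : ((k+1:ℕ):ℝ) - 1 = (k:ℝ) := by push_cast; ring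
        rw [plinQ_eq hτ w (by omega : 1 ≤ k+1) (by omega : k+1 ≤ n) (t := u)
          (by rw [hc2]; exact hu.1) (by push_cast; linarith [hu.2]), hc2, Nat.add_sub_cancel]
        simp only [hcS]
        ring
      rw [sq_shift_integral (Mk k) (w k) (cS k/2) ((k:ℝ)*τ) τ _ hτ.le heq1]
      rw [sq_shift_integral (w k) (cS k) 0 ((k:ℝ)*τ) τ (plinQ τ w n) hτ.le heq2]
      rw [stepQ_sq, stepQ_integral hτ (fun j => (cS j)^2) k
        (by linarith : (k:ℝ)*τ ≤ (k:ℝ)*τ + τ) (by linarith : (k:ℝ)*τ + τ ≤ ((k:ℝ)+1)*τ)]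
      ring
    -- continuous integral, g side
    have hIg : (∫ t in (0:ℝ)..T, ((plinQ τ gv n t)^2 + (stepQ τ cG t)^2))
        = ∑ k ∈ Finset.range n,
            (τ*((gv k)^2 + (cG k)^2) + τ^2*((gv k)*(cG k)) + τ^3*((cG k)^2/3)) := by
      rw [← hTn]
      have hint1 : ∀ a b : ℝ, IntervalIntegrable (fun t => (plinQ τ gv n t)^2) volume a b :=
        fun a b => Continuous.intervalIntegrable ((continuous_plinQ τ gv n).pow 2) a b
      have hint2 : ∀ k : ℕ, IntervalIntegrable (fun t => (stepQ τ cG t)^2) volume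
          ((k:ℝ)*τ) (((k:ℝ)+1)*τ) := by
        intro k
        rw [stepQ_sq]
        exact stepQ_intervalIntegrable_piece hτ _ k
      have hsum := intervalIntegral.sum_integral_adjacent_intervals (μ := volume)
        (a := fun k : ℕ => (k:ℝ)*τ) (n := n)
        (f := fun t => (plinQ τ gv n t)^2 + (stepQ τ cG t)^2)
        (fun k hk => by
          beta_reduce
          push_cast
          exact (hint1 _ _).add (hint2 k))
      simp only [Nat.cast_zero, zero_mul] at hsum
      rw [← hsum]
      apply Finset.sum_congr rfl
      intro k hk
      have hkn : k < n := Finset.mem_range.mp hk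
      have hc : ((k+1:ℕ):ℝ) = (k:ℝ)+1 := by push_cast; ring
      have hb : ((k:ℝ)+1)*τ = (k:ℝ)*τ + τ := by ring
      beta_reduce
      push_cast
      rw [show ((k:ℝ)+1)*τ = (k:ℝ)*τ + τ from by ring,
        intervalIntegral.integral_add (hint1 _ _) (hb ▸ hint2 k)]
      have heq : ∀ u ∈ Set.Icc ((k:ℝ)*τ) ((k:ℝ)*τ + τ),
          plinQ τ gv n u = gv k + cG k*(u - (k:ℝ)*τ) + 0*(u - (k:ℝ)*τ)^2 := by
        intro u hu
        have hc2 : ((k+1:ℕ):ℝ) - 1 = (k:ℝ) := by push_cast; ring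
        rw [plinQ_eq hτ gv (by omega : 1 ≤ k+1) (by omega : k+1 ≤ n) (t := u)
          (by rw [hc2]; exact hu.1) (by rw [hc]; linarith [hu.2]), hc2, Nat.add_sub_cancel]
        simp only [hcG]
        ring
      rw [sq_shift_integral (gv k) (cG k) 0 ((k:ℝ)*τ) τ (plinQ τ gv n) hτ.le heq]
      rw [stepQ_sq, stepQ_integral hτ (fun j => (cG j)^2) k
        (by linarith : (k:ℝ)*τ ≤ (k:ℝ)*τ + τ) (by linarith : (k:ℝ)*τ + τ ≤ ((k:ℝ)+1)*τ)]
      ring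
    -- final bounds
    have hs : (∫ t in (0:ℝ)..T, (((fun t => sv 0 + ∫ u in (0:ℝ)..t, plinQ τ w n u) t)^2
          + (plinQ τ w n t)^2 + (stepQ τ cS t)^2))
        ≤ (∑ k ∈ Finset.range n, τ * (sv k)^2
          + ∑ k ∈ Finset.Icc 1 n, τ * ((sv k - sv (k-1))/τ)^2
          + (τ * ((sv 1 - sv 0)/τ^2)^2
              + ∑ k ∈ Finset.Icc 1 (n-1), τ * ((sv (k+1) - 2*sv k + sv (k-1))/τ^2)^2))
          + (3*R^2 + 2*K + 1) * τ := by
      rw [hIs, hDS]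
      have hstep1 : ∑ k ∈ Finset.range n,
            (τ*((Mk k)^2 + (w k)^2 + (cS k)^2)
              + τ^2*((Mk k)*(w k) + (w k)*(cS k))
              + τ^3*((w k)^2/3 + (Mk k)*(cS k)/3 + (cS k)^2/3)
              + τ^4*((w k)*(cS k)/4)
              + τ^5*((cS k)^2/20))
          ≤ ∑ k ∈ Finset.range n,
              (1+3*τ)*(τ*(Mk k)^2 + τ*(w k)^2 + τ*(cS k)^2) := by
        apply Finset.sum_le_sum
        intro k _
        exact piece_bound_s (Mk k) (w k) (cS k) τ hτ hτ1
      have hstep2 : ∑ k ∈ Finset.range n,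
              (1+3*τ)*(τ*(Mk k)^2 + τ*(w k)^2 + τ*(cS k)^2)
          = (1+3*τ)*((∑ k ∈ Finset.range n, τ*(Mk k)^2) + (∑ k ∈ Finset.range n, τ*(w k)^2)
              + (∑ k ∈ Finset.range n, τ*(cS k)^2)) := by
        symm
        rw [mul_add, mul_add, Finset.mul_sum, Finset.mul_sum, Finset.mul_sum,
          ← Finset.sum_add_distrib, ← Finset.sum_add_distrib]
        exact Finset.sum_congr rfl fun k _ => by ring
      have h3τ : (0:ℝ) ≤ 1 + 3*τ := by linarith
      have hstep3 : (1+3*τ)*((∑ k ∈ Finset.range n, τ*(Mk k)^2)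
              + (∑ k ∈ Finset.range n, τ*(w k)^2) + (∑ k ∈ Finset.range n, τ*(cS k)^2))
          ≤ (1+3*τ)*(((∑ k ∈ Finset.range n, τ*(sv k)^2)
              + (∑ k ∈ Finset.range n, τ*(w (k+1))^2) + (∑ k ∈ Finset.range n, τ*(cS k)^2))
              + τ*K/2) := by
        apply mul_le_mul_of_nonneg_left _ h3τ
        linarith [hSM, hSW1]
      refine le_trans hstep1 (le_trans (le_of_eq hstep2) (le_trans hstep3 ?_))
      exact final_bound_s _ K R τ hτ hτ1 (by positivity) hRs hK0
    have hg : (∫ t in (0:ℝ)..T, ((plinQ τ gv n t)^2 + (stepQ τ cG t)^2))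
        ≤ (∑ k ∈ Finset.range n, τ * (gv k)^2
            + ∑ k ∈ Finset.Icc 1 n, τ * ((gv k - gv (k-1))/τ)^2)
          + (3*R^2 + 2*K + 1) * τ := by
      rw [hIg, hDG]
      have hstep1 : ∑ k ∈ Finset.range n,
            (τ*((gv k)^2 + (cG k)^2) + τ^2*((gv k)*(cG k)) + τ^3*((cG k)^2/3))
          ≤ ∑ k ∈ Finset.range n, (1+3*τ)*(τ*(gv k)^2 + τ*(cG k)^2) := by
        apply Finset.sum_le_sum
        intro k _
        exact piece_bound_g (gv k) (cG k) τ hτ hτ1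
      have hstep2 : ∑ k ∈ Finset.range n, (1+3*τ)*(τ*(gv k)^2 + τ*(cG k)^2)
          = (1+3*τ)*((∑ k ∈ Finset.range n, τ*(gv k)^2) + ∑ k ∈ Finset.range n, τ*(cG k)^2) := by
        symm
        rw [mul_add, Finset.mul_sum, Finset.mul_sum, ← Finset.sum_add_distrib]
        exact Finset.sum_congr rfl fun k _ => by ring
      refine le_trans hstep1 (le_trans (le_of_eq hstep2) ?_)
      exact final_bound_g _ K R τ hτ hK0 hRg
    exact max_le (hs.trans (add_le_add_left (le_max_left _ _) _))
      (hg.trans (add_le_add_left (le_max_right _ _) _))
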